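/- Let V be a vector space over ℚ and let t > 1 be an integer. For any distinct nonzero vectors v₁, …, v_t ∈ V, the vectors wᵢ = (1, vᵢ, vᵢ^{⊗2}, …, vᵢ^{⊗(t−1)}) in the direct sum ⊕_{j=0}^{t−1} V^{⊗j} are linearly independent over ℚ. -/

import Mathlib

open scoped TensorProduct

/-- The functional on the `n`-th tensor power induced by a linear functional `f`,
sending `x₁ ⊗ ⋯ ⊗ xₙ` to `∏ f xᵢ`. -/
noncomputable def powFunctional (V : Type) [AddCommGroup V] [Module ℚ V]
    (f : Module.Dual ℚ V) (n : ℕ) : TensorPower ℚ n V →ₗ[ℚ] ℚ :=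
  PiTensorProduct.lift ((MultilinearMap.mkPiAlgebra ℚ (Fin n) ℚ).compLinearMap fun _ => f)

theorem powFunctional_tprod (V : Type) [AddCommGroup V] [Module ℚ V]
    (f : Module.Dual ℚ V) (n : ℕ) (x : V) :
    powFunctional V f n (PiTensorProduct.tprod ℚ fun _ : Fin n => x) = f x ^ n := by
  simp [powFunctional]

/-- Over `ℚ` there is a linear functional separating finitely many given vectors. -/
theorem exists_dual_injective (V : Type) [AddCommGroup V] [Module ℚ V]
    (t : ℕ) (v : Fin t → V) (hdist : Function.Injective v) :
    ∃ f : Module.Dual ℚ V, Function.Injective (f ∘ v) := by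
  classical
  set p : {q : Fin t × Fin t // q.1 ≠ q.2} → Subspace ℚ (Module.Dual ℚ V) :=
    fun q => LinearMap.ker (Module.Dual.eval ℚ V (v q.1.1 - v q.1.2))
  have hne : ∀ q, p q ≠ ⊤ := by
    intro q hq
    have hsub : v q.1.1 - v q.1.2 ≠ 0 := sub_ne_zero.mpr fun h => q.2 (hdist h)
    rw [Ne, ← Module.forall_dual_apply_eq_zero_iff ℚ (v q.1.1 - v q.1.2)] at hsub
    push_neg at hsub
    obtain ⟨φ, hφ⟩ := hsub
    have : φ ∈ p q := hq ▸ Submodule.mem_top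
    apply hφ
    have h2 : φ ∈ LinearMap.ker (Module.Dual.eval ℚ V (v q.1.1 - v q.1.2)) := this
    simpa using h2
  have hcov : ⋃ q, (p q : Set (Module.Dual ℚ V)) ≠ Set.univ := by
    intro h
    obtain ⟨q, hq⟩ := Subspace.exists_eq_top_of_iUnion_eq_univ h
    exact hne q hq
  obtain ⟨f, hf⟩ := Set.ne_univ_iff_exists_notMem _ |>.mp hcov
  refine ⟨f, fun i k hik => ?_⟩
  by_contra hne'
  apply hf
  refine Set.mem_iUnion.mpr ⟨⟨(i, k), hne'⟩, ?_⟩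
  simp only [SetLike.mem_coe, p, LinearMap.mem_ker]
  simp only [Function.comp_apply] at hik
  simp [Module.Dual.eval, hik]

/-- Let `V` be a vector space over `ℚ` and `t > 1`. For distinct nonzero vectors
`v₁, …, v_t ∈ V`, the vectors `wᵢ = (1, vᵢ, vᵢ^{⊗2}, …, vᵢ^{⊗(t−1)})` in the direct sum
`⊕_{j=0}^{t−1} V^{⊗j}` are linearly independent over `ℚ`. -/
theorem stmt2 (V : Type) [AddCommGroup V] [Module ℚ V]
    (t : ℕ) (ht : 1 < t) (v : Fin t → V)
    (hdist : Function.Injective v) (hne : ∀ i, v i ≠ 0) :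
    LinearIndependent ℚ
      (fun i : Fin t =>
        (fun j : Fin t => PiTensorProduct.tprod ℚ (fun _ : Fin (j : ℕ) => v i) :
          Π j : Fin t, TensorPower ℚ (j : ℕ) V)) := by
  obtain ⟨f, hf⟩ := exists_dual_injective V t v hdist
  set L : (Π j : Fin t, TensorPower ℚ (j : ℕ) V) →ₗ[ℚ] (Fin t → ℚ) :=
    LinearMap.pi fun j => (powFunctional V f (j : ℕ)).comp (LinearMap.proj j)
  have key : LinearIndependent ℚ
      (fun i : Fin t => L (fun j : Fin t =>
        PiTensorProduct.tprod ℚ (fun _ : Fin (j : ℕ) => v i))) := by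
    have : (fun i : Fin t => L (fun j : Fin t =>
        PiTensorProduct.tprod ℚ (fun _ : Fin (j : ℕ) => v i)))
        = fun i => (Matrix.vandermonde (f ∘ v)) i := by
      funext i j
      simp [L, Matrix.vandermonde, powFunctional_tprod]
    rw [this]
    change LinearIndependent ℚ (Matrix.vandermonde (f ∘ v)).row
    rw [Matrix.linearIndependent_rows_iff_isUnit,
      Matrix.isUnit_iff_isUnit_det]
    exact (Matrix.det_vandermonde_ne_zero_iff.mpr hf).isUnit
  exact key.of_comp L
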